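/- Let s > 0 with s not a positive integer and let u be a Schwartz function on ℝ. Then there exist constants c(s), C(s) > 0 depending only on s such that ∫_0^∞ ρ^{2s−1} |φ_{[s],0}(u, ρ)| dρ ≤ c(s) ‖u‖²_{Ḣ^s(ℝ)}, and for every R > 0, ‖u‖²_{Ḣ^s(ℝ)} ≤ C(s) ( ∫_R^∞ ρ^{2s−1} |φ_{[s],0}(u, ρ)| dρ + R^{2(s−[s])} ‖u‖²_{Ḣ^{[s]}(ℝ)} ). -/

import Mathlib

open MeasureTheory Complex

/-- The Fourier transform with normalization `û(ζ) = (2π)^{-1/2} ∫ e^{ixζ} u(x) dx`. -/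
noncomputable def FT (u : ℝ → ℂ) (ζ : ℝ) : ℂ :=
  (Real.sqrt (2 * Real.pi) : ℂ)⁻¹ * ∫ x : ℝ, Complex.exp (Complex.I * x * ζ) * u x

/-- The squared homogeneous Sobolev seminorm `‖u‖²_{Ḣ^s} = ∫ |ζ|^{2s} |û(ζ)|² dζ`. -/
noncomputable def homSobNormSq (s : ℝ) (u : ℝ → ℂ) : ℝ :=
  ∫ ζ : ℝ, |ζ| ^ (2 * s) * ‖FT u ζ‖ ^ 2

/-- `φ_{L,0}(u,ρ) = ((−1)^L/(2^{2L+1}ρ^{2L})) ∫ ζ^{2L+2}|û(ζ)|²/(ζ²+4ρ²) dζ`. -/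
noncomputable def phiL0 (L : ℕ) (u : ℝ → ℂ) (ρ : ℝ) : ℝ :=
  ((-1 : ℝ) ^ L / (2 ^ (2 * L + 1) * ρ ^ (2 * L)))
    * ∫ ζ : ℝ, ζ ^ (2 * L + 2) * ‖FT u ζ‖ ^ 2 / (ζ ^ 2 + 4 * ρ ^ 2)


section Aux
open Real Set SchwartzMap ENNReal Filter

lemma FT_eq (u : ℝ → ℂ) (ζ : ℝ) :
    FT u ζ = (Real.sqrt (2 * Real.pi) : ℂ)⁻¹
      * FourierTransform.fourier u (-ζ / (2 * Real.pi)) := by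
  rw [FT, Real.fourier_real_eq_integral_exp_smul]
  congr 1
  apply integral_congr_ae
  filter_upwards with x
  rw [smul_eq_mul]
  congr 1
  congr 1
  have hπ : (Real.pi : ℝ) ≠ 0 := Real.pi_ne_zero
  have : -2 * Real.pi * x * (-ζ / (2 * Real.pi)) = x * ζ := by field_simp
  rw [this]
  push_cast
  ring


lemma FT_normsq (u : SchwartzMap ℝ ℂ) (ζ : ℝ) :
    ‖FT (⇑u) ζ‖ ^ 2
      = (2 * Real.pi)⁻¹ * ‖(fourierTransformCLM ℝ u) (-ζ / (2 * Real.pi))‖ ^ 2 := by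
  rw [FT_eq, fourierTransformCLM_apply, SchwartzMap.fourier_coe, norm_mul, mul_pow, norm_inv]
  congr 1
  rw [inv_pow, Complex.norm_real, Real.norm_eq_abs,
    _root_.abs_of_nonneg (Real.sqrt_nonneg _), Real.sq_sqrt (by positivity)]

lemma FT_cont (u : SchwartzMap ℝ ℂ) : Continuous (FT (⇑u)) := by
  have : FT (⇑u) = fun ζ => (Real.sqrt (2 * Real.pi) : ℂ)⁻¹
      * (fourierTransformCLM ℝ u) (-ζ / (2 * Real.pi)) := by
    funext ζ; rw [FT_eq, fourierTransformCLM_apply, SchwartzMap.fourier_coe]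
  rw [this]
  exact continuous_const.mul ((fourierTransformCLM ℝ u).continuous.comp (by continuity))

/-- integrability of `|ζ|^a ‖FT u ζ‖²` for `a ≥ 0`. -/
lemma integrable_rpow_mul_FT (u : SchwartzMap ℝ ℂ) (a : ℝ) (ha : 0 ≤ a) :
    Integrable (fun ζ : ℝ => |ζ| ^ a * ‖FT (⇑u) ζ‖ ^ 2) := by
  set v := fourierTransformCLM ℝ u with hv
  obtain ⟨k, hk⟩ := exists_nat_ge (a + 2)
  -- decay of v
  have hdec : ∀ x : ℝ, (1 + ‖x‖) ^ k * ‖v x‖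
      ≤ 2 ^ k * (Finset.Iic (k, 0)).sup (fun m => SchwartzMap.seminorm ℝ m.1 m.2) v := by
    intro x
    have := one_add_le_sup_seminorm_apply (𝕜 := ℝ) (m := (k, 0)) le_rfl le_rfl v x
    simpa [norm_iteratedFDeriv_zero] using this
  set M : ℝ := 2 ^ k * (Finset.Iic (k, 0)).sup (fun m => SchwartzMap.seminorm ℝ m.1 m.2) v with hM
  have hM0 : 0 ≤ M := le_trans (by positivity) (hdec 0)
  have hbdd : ∀ x : ℝ, ‖v x‖ ≤ M := by
    intro x
    have := hdec x
    have h1 : (1:ℝ) ≤ (1 + ‖x‖) ^ k := one_le_pow₀ (by linarith [norm_nonneg x])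
    nlinarith [norm_nonneg (v x)]
  -- global bound : (1+|ζ|)^k * ‖FT u ζ‖^2 ≤ C
  have h2π : (1:ℝ) ≤ 2 * Real.pi := by nlinarith [Real.pi_gt_three]
  have key : ∀ ζ : ℝ, (1 + |ζ|) ^ k * ‖FT (⇑u) ζ‖ ^ 2
      ≤ (2 * Real.pi) ^ k * (2 * Real.pi)⁻¹ * (M * M) := by
    intro ζ
    set y : ℝ := -ζ / (2 * Real.pi) with hy
    have hyabs : |ζ| = 2 * Real.pi * ‖y‖ := by
      rw [hy, Real.norm_eq_abs, abs_div, abs_neg]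
      rw [_root_.abs_of_nonneg (by positivity : (0:ℝ) ≤ 2 * Real.pi)]
      field_simp
    have h1 : (1 + |ζ|) ^ k ≤ (2 * Real.pi) ^ k * (1 + ‖y‖) ^ k := by
      rw [← mul_pow]
      apply pow_le_pow_left₀ (by positivity)
      rw [hyabs]; nlinarith [norm_nonneg y]
    have h2 : ‖FT (⇑u) ζ‖ ^ 2 = (2 * Real.pi)⁻¹ * ‖v y‖ ^ 2 := FT_normsq u ζ
    have h3 : (1 + ‖y‖) ^ k * ‖v y‖ ^ 2 ≤ M * M := by
      have := hdec y
      have h4 := hbdd y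
      nlinarith [norm_nonneg (v y), pow_nonneg (by positivity : (0:ℝ) ≤ 1 + ‖y‖) k]
    calc (1 + |ζ|) ^ k * ‖FT (⇑u) ζ‖ ^ 2
        ≤ ((2 * Real.pi) ^ k * (1 + ‖y‖) ^ k) * ((2 * Real.pi)⁻¹ * ‖v y‖ ^ 2) := by
          rw [h2]; apply mul_le_mul_of_nonneg_right h1 (by positivity)
      _ = (2 * Real.pi) ^ k * (2 * Real.pi)⁻¹ * ((1 + ‖y‖) ^ k * ‖v y‖ ^ 2) := by ring
      _ ≤ _ := by apply mul_le_mul_of_nonneg_left h3 (by positivity)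
  set Ctot : ℝ := (2 * Real.pi) ^ k * (2 * Real.pi)⁻¹ * (M * M) with hC
  -- dominating function
  have hdom : ∀ ζ : ℝ, ‖|ζ| ^ a * ‖FT (⇑u) ζ‖ ^ 2‖ ≤ Ctot * (1 + ‖ζ‖) ^ (-(2:ℝ)) := by
    intro ζ
    have hb : (0:ℝ) < 1 + |ζ| := by positivity
    rw [Real.norm_eq_abs, _root_.abs_of_nonneg (by positivity)]
    have e1 : |ζ| ^ a ≤ (1 + |ζ|) ^ a :=
      Real.rpow_le_rpow (abs_nonneg _) (by linarith) ha
    have e2 : (1 + |ζ|) ^ a = (1 + |ζ|) ^ (a - k) * (1 + |ζ|) ^ (k:ℝ) := by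
      rw [← Real.rpow_add hb]; ring_nf
    have e3 : (1 + |ζ|) ^ ((k:ℕ):ℝ) = (1 + |ζ|) ^ (k:ℕ) := Real.rpow_natCast _ _
    have e4 : (1 + |ζ|) ^ (a - k) ≤ (1 + |ζ|) ^ (-(2:ℝ)) :=
      Real.rpow_le_rpow_of_exponent_le (by linarith [abs_nonneg ζ]) (by linarith)
    calc |ζ| ^ a * ‖FT (⇑u) ζ‖ ^ 2
        ≤ (1 + |ζ|) ^ (a - k) * ((1 + |ζ|) ^ k * ‖FT (⇑u) ζ‖ ^ 2) := by
          rw [← mul_assoc, ← e3, ← e2]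
          exact mul_le_mul_of_nonneg_right e1 (by positivity)
      _ ≤ (1 + |ζ|) ^ (-(2:ℝ)) * Ctot := by
          apply mul_le_mul e4 (key ζ) (by positivity) (by positivity)
      _ = Ctot * (1 + ‖ζ‖) ^ (-(2:ℝ)) := by rw [mul_comm, Real.norm_eq_abs]
  have hint : Integrable (fun ζ : ℝ => Ctot * (1 + ‖ζ‖) ^ (-(2:ℝ))) :=
    (integrable_one_add_norm (E := ℝ) (by norm_num)).const_mul Ctot
  refine hint.mono' ?_ (Filter.Eventually.of_forall hdom)
  exact ((measurable_norm.pow_const a).mul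
    (((FT_cont u).norm.pow 2).measurable)).aestronglyMeasurable

lemma lintegral_Ioi_mul_left {a : ℝ} (ha : 0 < a) (f : ℝ → ℝ≥0∞) (hf : Measurable f) :
    ∫⁻ x in Set.Ioi (0:ℝ), f x = ENNReal.ofReal a * ∫⁻ t in Set.Ioi (0:ℝ), f (a * t) := by
  calc ∫⁻ x in Set.Ioi (0:ℝ), f x ∂volume
      = ∫⁻ x in Set.Ioi (0:ℝ), f x
          ∂(ENNReal.ofReal |a| • Measure.map (a * ·) volume) := by
        rw [Real.smul_map_volume_mul_left ha.ne']
    _ = ENNReal.ofReal |a| * ∫⁻ x in Set.Ioi (0:ℝ), f x ∂(Measure.map (a * ·) volume) := by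
        rw [Measure.restrict_smul, lintegral_smul_measure, smul_eq_mul]
    _ = ENNReal.ofReal a * ∫⁻ t in Set.Ioi (0:ℝ), f (a * t) := by
        rw [Measure.restrict_map (measurable_const_mul a) measurableSet_Ioi,
          lintegral_map hf (measurable_const_mul a), abs_of_pos ha,
          preimage_const_mul_Ioi₀ (0:ℝ) ha, zero_div]

noncomputable def Kconst (σ : ℝ) : ℝ≥0∞ :=
  ∫⁻ t in Set.Ioi (0:ℝ), ENNReal.ofReal (t ^ (2*σ - 1) / (1 + 4 * t ^ 2))

lemma meas_kern (σ : ℝ) : Measurable (fun t : ℝ => ENNReal.ofReal (t ^ (2*σ-1) / (1 + 4 * t ^ 2))) :=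
  ((measurable_id.pow_const _).div (((measurable_id.pow_const _).const_mul (4:ℝ)).const_add 1)).ennreal_ofReal

lemma integrableOn_kern {σ : ℝ} (h0 : 0 < σ) (h1 : σ < 1) :
    IntegrableOn (fun t : ℝ => t ^ (2*σ - 1) / (1 + 4 * t ^ 2)) (Set.Ioi 0) := by
  have hmeas : AEStronglyMeasurable (fun t : ℝ => t ^ (2*σ - 1) / (1 + 4 * t ^ 2))
      (volume.restrict (Set.Ioi (0:ℝ))) := by
    refine Measurable.aestronglyMeasurable ?_
    exact (measurable_id.pow_const _).div ((((measurable_id.pow_const _).const_mul (4:ℝ))).const_add 1)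
  have hsplit : Set.Ioc (0:ℝ) 1 ∪ Set.Ioi (1:ℝ) = Set.Ioi (0:ℝ) :=
    Set.Ioc_union_Ioi_eq_Ioi zero_le_one
  rw [← hsplit, IntegrableOn, Measure.restrict_union (Set.Ioc_disjoint_Ioi le_rfl) measurableSet_Ioi]
  rw [integrable_add_measure]
  constructor
  · -- on (0,1]
    have hrpow : IntegrableOn (fun t : ℝ => t ^ (2*σ - 1)) (Set.Ioc (0:ℝ) 1) := by
      have := intervalIntegral.intervalIntegrable_rpow' (a := 0) (b := 1)
        (r := 2*σ-1) (by linarith)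
      rwa [intervalIntegrable_iff_integrableOn_Ioc_of_le zero_le_one] at this
    refine hrpow.mono' (hmeas.mono_measure (Measure.restrict_mono (by rw [← hsplit]; exact Set.subset_union_left) le_rfl)) ?_
    filter_upwards [ae_restrict_mem measurableSet_Ioc] with t ht
    have ht0 : 0 < t := ht.1
    rw [Real.norm_eq_abs, abs_div, _root_.abs_of_nonneg (Real.rpow_nonneg ht0.le _),
      _root_.abs_of_nonneg (by positivity : (0:ℝ) ≤ 1 + 4*t^2)]
    rw [div_le_iff₀ (by positivity)]
    nlinarith [Real.rpow_nonneg ht0.le (2*σ-1)]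
  · -- on (1,∞)
    have hrpow : IntegrableOn (fun t : ℝ => (1/4) * t ^ (2*σ - 3)) (Set.Ioi (1:ℝ)) :=
      (integrableOn_Ioi_rpow_of_lt (by linarith) one_pos).const_mul _
    refine hrpow.mono' (hmeas.mono_measure (Measure.restrict_mono (by rw [← hsplit]; exact Set.subset_union_right) le_rfl)) ?_
    filter_upwards [ae_restrict_mem measurableSet_Ioi] with t ht
    have ht1 : (1:ℝ) < t := ht
    have ht0 : (0:ℝ) < t := by linarith
    rw [Real.norm_eq_abs, abs_div, _root_.abs_of_nonneg (Real.rpow_nonneg ht0.le _),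
      _root_.abs_of_nonneg (by positivity : (0:ℝ) ≤ 1 + 4*t^2)]
    have key : t ^ (2*σ-1) / (1 + 4*t^2) ≤ t ^ (2*σ-1) / (4*t^2) := by
      apply div_le_div_of_nonneg_left (Real.rpow_nonneg ht0.le _) (by positivity) (by linarith)
    refine key.trans (le_of_eq ?_)
    have e5 : t ^ (2*σ-1) = t ^ (2*σ-3) * t ^ (2:ℝ) := by
      rw [← Real.rpow_add ht0]; ring_nf
    have e6 : (t:ℝ) ^ (2:ℕ) = t ^ (2:ℝ) := by
      rw [← Real.rpow_natCast t 2]; norm_num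
    have e7 : t ^ (2:ℝ) ≠ 0 := by positivity
    rw [e5, e6]
    field_simp
lemma Kconst_lt_top {σ : ℝ} (h0 : 0 < σ) (h1 : σ < 1) : Kconst σ < ⊤ :=
  (integrableOn_kern h0 h1).lintegral_lt_top

lemma Kconst_pos {σ : ℝ} (h0 : 0 < σ) (h1 : σ < 1) : 0 < Kconst σ := by
  have hsub : ∫⁻ t in Set.Ioc (1:ℝ) 2, ENNReal.ofReal (t ^ (2*σ-1) / (1 + 4 * t ^ 2))
      ≤ Kconst σ := by
    apply lintegral_mono_set
    intro x hx; exact lt_trans one_pos hx.1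
  refine lt_of_lt_of_le ?_ hsub
  have hvol : (volume (Set.Ioc (1:ℝ) 2)) = 1 := by
    rw [Real.volume_Ioc]; norm_num
  have hlow : ENNReal.ofReal (1/34) * volume (Set.Ioc (1:ℝ) 2)
      ≤ ∫⁻ t in Set.Ioc (1:ℝ) 2, ENNReal.ofReal (t ^ (2*σ-1) / (1 + 4 * t ^ 2)) := by
    rw [← setLIntegral_const]
    apply setLIntegral_mono (meas_kern σ)
    intro t ht
    apply ENNReal.ofReal_le_ofReal
    have ht1 : (1:ℝ) ≤ t := ht.1.le
    have ht2 : t ≤ 2 := ht.2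
    have e1 : t ^ (-1:ℝ) ≤ t ^ (2*σ-1) :=
      Real.rpow_le_rpow_of_exponent_le ht1 (by linarith)
    have e2 : (1/2 : ℝ) ≤ t ^ (-1:ℝ) := by
      rw [Real.rpow_neg_one]
      rw [le_inv_comm₀ (by norm_num) (by linarith)]
      linarith
    have e3 : 1 + 4*t^2 ≤ 17 := by nlinarith
    rw [le_div_iff₀ (by positivity : (0:ℝ) < 1 + 4*t^2)]
    linarith
  calc (0:ℝ≥0∞) < ENNReal.ofReal (1/34) * volume (Set.Ioc (1:ℝ) 2) := by
        rw [hvol, mul_one]; exact ENNReal.ofReal_pos.mpr (by norm_num)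
    _ ≤ _ := hlow

lemma J_eq {σ : ℝ} {z : ℝ} (hz : 0 < z) :
    ∫⁻ ρ in Set.Ioi (0:ℝ), ENNReal.ofReal (ρ ^ (2*σ-1) / (z^2 + 4 * ρ^2))
      = ENNReal.ofReal (z ^ (2*σ-2)) * Kconst σ := by
  have hf : Measurable (fun ρ : ℝ => ENNReal.ofReal (ρ ^ (2*σ-1) / (z^2 + 4*ρ^2))) :=
    ((measurable_id.pow_const _).div
      ((((measurable_id.pow_const _).const_mul (4:ℝ))).const_add (z^2))).ennreal_ofReal
  rw [lintegral_Ioi_mul_left hz _ hf]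
  have hcong : ∫⁻ t in Set.Ioi (0:ℝ), ENNReal.ofReal ((z*t) ^ (2*σ-1) / (z^2 + 4*(z*t)^2))
      = ∫⁻ t in Set.Ioi (0:ℝ),
          ENNReal.ofReal (z ^ (2*σ-3)) * ENNReal.ofReal (t ^ (2*σ-1) / (1 + 4*t^2)) := by
    apply setLIntegral_congr_fun_ae measurableSet_Ioi
    apply Filter.Eventually.of_forall
    intro t ht
    have ht0 : 0 < t := ht
    rw [← ENNReal.ofReal_mul (Real.rpow_nonneg hz.le _)]
    congr 1
    rw [Real.mul_rpow hz.le ht0.le]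
    have hden : z^2 + 4*(z*t)^2 = z^2 * (1 + 4*t^2) := by ring
    rw [hden]
    have hz2 : (z:ℝ)^2 = z ^ (2:ℝ) := by
      rw [← Real.rpow_natCast z 2]; norm_num
    have hzz : z ^ (2*σ-1) = z ^ (2*σ-3) * z ^ (2:ℝ) := by
      rw [← Real.rpow_add hz]; ring_nf
    rw [hzz, hz2]
    have h2 : z ^ (2:ℝ) ≠ 0 := by positivity
    have h3 : (1:ℝ) + 4*t^2 ≠ 0 := by positivity
    field_simp
  rw [hcong, lintegral_const_mul _ (meas_kern σ), ← mul_assoc,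
    ← ENNReal.ofReal_mul hz.le]
  rw [show z * z ^ (2*σ-3) = z ^ (2*σ-2) by
    nth_rewrite 1 [← Real.rpow_one z]
    rw [← Real.rpow_add hz]; ring_nf]
  rfl

end Aux

lemma final_arith {c2 Kr p iv m IR Y t Rs H : ℝ}
    (hc2 : 0 < c2) (hKr : 0 < Kr) (hIR : 0 ≤ IR) (hY : 0 ≤ Y) (hRs : 0 ≤ Rs)
    (hc2p : 1 ≤ c2 * p) (hm1 : p ≤ m) (hm2 : iv ≤ m)
    (ht : t ≤ c2 * (Rs * iv) * Y) (hEq : c2 * Kr * H = t + IR) :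
    H ≤ Kr⁻¹ * m * (IR + Rs * Y) := by
  have hp0 : 0 < p := by nlinarith
  have hm0 : 0 < m := lt_of_lt_of_le hp0 hm1
  rw [← mul_le_mul_iff_right₀ (mul_pos hc2 hKr)]
  have hr : c2 * Kr * (Kr⁻¹ * m * (IR + Rs * Y)) = c2 * m * (IR + Rs * Y) := by
    field_simp
  rw [hr, hEq]
  have e1 : IR ≤ c2 * m * IR := by
    nlinarith [mul_le_mul_of_nonneg_left hm1 hc2.le]
  have e2 : t ≤ c2 * m * (Rs * Y) := by
    nlinarith [mul_le_mul_of_nonneg_left hm2 hc2.le, mul_nonneg hRs hY]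
  nlinarith

open ENNReal in
/-- Lemma 2 of the paper: for noninteger `s > 0`, the weighted integral of
`|φ_{[s],0}(u,ρ)|` is comparable to the homogeneous `Ḣ^s` seminorm squared, with
constants depending only on `s`. -/

theorem phiL0_comparison_Hs (s : ℝ) (hs : 0 < s) (hns : ∀ n : ℕ, 0 < n → s ≠ n) :
    ∃ c : ℝ, 0 < c ∧ ∃ C : ℝ, 0 < C ∧ ∀ u : SchwartzMap ℝ ℂ,
      ((∫ ρ in Set.Ioi (0 : ℝ), ρ ^ (2 * s - 1) * |phiL0 ⌊s⌋₊ (⇑u) ρ|)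
          ≤ c * homSobNormSq s (⇑u)) ∧
      (∀ R : ℝ, 0 < R →
        homSobNormSq s (⇑u)
          ≤ C * ((∫ ρ in Set.Ioi R, ρ ^ (2 * s - 1) * |phiL0 ⌊s⌋₊ (⇑u) ρ|)
              + R ^ (2 * (s - ⌊s⌋₊)) * homSobNormSq (⌊s⌋₊ : ℝ) (⇑u))) := by
  classical
  set L : ℕ := ⌊s⌋₊ with hLdef
  set σ : ℝ := s - (L : ℝ) with hσdef
  have hσ0 : 0 < σ := by
    rcases Nat.eq_zero_or_pos L with h | h
    · rw [hσdef, h]; simpa using hs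
    · have h1 : (L : ℝ) ≤ s := Nat.floor_le hs.le
      have h2 : s ≠ (L : ℝ) := hns L h
      rw [hσdef]
      rcases lt_or_eq_of_le h1 with h3 | h3
      · linarith
      · exact absurd h3.symm h2
  have hσ1 : σ < 1 := by
    have := Nat.lt_floor_add_one s
    rw [hσdef]; push_cast at this ⊢; linarith
  have hK0 := Kconst_pos hσ0 hσ1
  have hKtop := Kconst_lt_top hσ0 hσ1
  set c2 : ℝ := ((2 : ℝ))⁻¹ ^ (2 * L + 1) with hc2def
  have hc2 : 0 < c2 := by positivity
  set Kr : ℝ := (Kconst σ).toReal with hKrdef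
  have hKr0 : 0 < Kr := ENNReal.toReal_pos hK0.ne' hKtop.ne
  set m : ℝ := max ((2 : ℝ) ^ (2 * L + 1)) (1 / (2 * σ)) with hmdef
  have hm0 : 0 < m := lt_max_of_lt_left (by positivity)
  refine ⟨c2 * Kr, by positivity, Kr⁻¹ * m, by positivity, fun u => ?_⟩
  -- per-u setup
  set gg : ℝ → ℝ := fun ζ => ‖FT (⇑u) ζ‖ ^ 2 with hgg
  have hggm : Measurable gg := ((FT_cont u).norm.pow 2).measurable
  have hgg0 : ∀ ζ, 0 ≤ gg ζ := fun ζ => by positivity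
  have hintL2 : Integrable (fun ζ : ℝ => ζ ^ (2 * L + 2) * gg ζ) := by
    have he : (fun ζ : ℝ => ζ ^ (2 * L + 2) * gg ζ)
        = fun ζ : ℝ => |ζ| ^ ((2 * L + 2 : ℕ) : ℝ) * gg ζ := by
      funext ζ
      rw [Real.rpow_natCast, Even.pow_abs (by exact ⟨L + 1, by ring⟩)]
    rw [he]
    exact integrable_rpow_mul_FT u _ (by positivity)
  -- the homogeneous norms as lintegrals
  set A : ℝ → ℝ≥0∞ := fun ζ => ENNReal.ofReal (|ζ| ^ (2 * s) * gg ζ) with hAdef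
  have hAmeas : Measurable A :=
    ((measurable_id.abs.pow_const _).mul hggm).ennreal_ofReal
  have hH : ENNReal.ofReal (homSobNormSq s (⇑u)) = ∫⁻ ζ, A ζ := by
    rw [homSobNormSq]
    exact ofReal_integral_eq_lintegral_ofReal
      (integrable_rpow_mul_FT u (2 * s) (by positivity))
      (Filter.Eventually.of_forall fun ζ =>
        mul_nonneg (Real.rpow_nonneg (abs_nonneg _) _) (hgg0 ζ))
  have hHnn : 0 ≤ homSobNormSq s (⇑u) :=
    integral_nonneg fun ζ => mul_nonneg (Real.rpow_nonneg (abs_nonneg _) _) (hgg0 ζ)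
  set B : ℝ≥0∞ := ∫⁻ ζ : ℝ, ENNReal.ofReal (|ζ| ^ (2 * (L : ℝ)) * gg ζ) with hBdef
  have hB : ENNReal.ofReal (homSobNormSq (L : ℝ) (⇑u)) = B := by
    rw [homSobNormSq]
    exact ofReal_integral_eq_lintegral_ofReal
      (integrable_rpow_mul_FT u (2 * (L : ℝ)) (by positivity))
      (Filter.Eventually.of_forall fun ζ =>
        mul_nonneg (Real.rpow_nonneg (abs_nonneg _) _) (hgg0 ζ))
  have hYnn : 0 ≤ homSobNormSq (L : ℝ) (⇑u) :=
    integral_nonneg fun ζ => mul_nonneg (Real.rpow_nonneg (abs_nonneg _) _) (hgg0 ζ)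
  -- kernel functions
  set W : ℝ → ℝ≥0∞ := fun ρ => ENNReal.ofReal (c2 * ρ ^ (2 * σ - 1)) with hWdef
  set Hf : ℝ → ℝ → ℝ≥0∞ :=
    fun ρ ζ => ENNReal.ofReal (ζ ^ (2 * L + 2) * gg ζ / (ζ ^ 2 + 4 * ρ ^ 2)) with hHfdef
  have hHfmeas : ∀ ρ, Measurable (Hf ρ) := fun ρ =>
    (((measurable_id.pow_const _).mul hggm).div
      ((measurable_id.pow_const 2).add_const (4 * ρ ^ 2))).ennreal_ofReal
  have hWmeas : Measurable W :=
    ((measurable_id.pow_const _).const_mul c2).ennreal_ofReal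
  -- pointwise identity for the integrand
  have hphiabs : ∀ ρ : ℝ, 0 < ρ →
      ENNReal.ofReal (ρ ^ (2 * s - 1) * |phiL0 L (⇑u) ρ|) = W ρ * ∫⁻ ζ, Hf ρ ζ := by
    intro ρ hρ
    have hd : ∀ ζ : ℝ, (0 : ℝ) < ζ ^ 2 + 4 * ρ ^ 2 := fun ζ => by positivity
    have hFρ : Integrable (fun ζ : ℝ => ζ ^ (2 * L + 2) * gg ζ / (ζ ^ 2 + 4 * ρ ^ 2)) := by
      refine (hintL2.const_mul (1 / (4 * ρ ^ 2))).mono' ?_ ?_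
      · exact ((((measurable_id.pow_const _).mul hggm).div
          ((measurable_id.pow_const 2).add_const (4 * ρ ^ 2)))).aestronglyMeasurable
      · refine Filter.Eventually.of_forall fun ζ => ?_
        have hnum : 0 ≤ ζ ^ (2 * L + 2) * gg ζ :=
          mul_nonneg (Even.pow_nonneg ⟨L + 1, by ring⟩ ζ) (hgg0 ζ)
        rw [Real.norm_eq_abs, _root_.abs_of_nonneg (div_nonneg hnum (hd ζ).le)]
        calc ζ ^ (2 * L + 2) * gg ζ / (ζ ^ 2 + 4 * ρ ^ 2)
            ≤ ζ ^ (2 * L + 2) * gg ζ / (4 * ρ ^ 2) :=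
              div_le_div_of_nonneg_left hnum (by positivity) (by nlinarith [sq_nonneg ζ])
          _ = 1 / (4 * ρ ^ 2) * (ζ ^ (2 * L + 2) * gg ζ) := by ring
    have hnn : 0 ≤ᵐ[volume] fun ζ : ℝ => ζ ^ (2 * L + 2) * gg ζ / (ζ ^ 2 + 4 * ρ ^ 2) :=
      Filter.Eventually.of_forall fun ζ => div_nonneg
        (mul_nonneg (Even.pow_nonneg ⟨L + 1, by ring⟩ ζ) (hgg0 ζ)) (hd ζ).le
    have hIρ : ENNReal.ofReal (∫ ζ : ℝ, ζ ^ (2 * L + 2) * gg ζ / (ζ ^ 2 + 4 * ρ ^ 2))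
        = ∫⁻ ζ, Hf ρ ζ := ofReal_integral_eq_lintegral_ofReal hFρ hnn
    have hInn : 0 ≤ ∫ ζ : ℝ, ζ ^ (2 * L + 2) * gg ζ / (ζ ^ 2 + 4 * ρ ^ 2) :=
      integral_nonneg fun ζ => div_nonneg
        (mul_nonneg (Even.pow_nonneg ⟨L + 1, by ring⟩ ζ) (hgg0 ζ)) (hd ζ).le
    have habs : ρ ^ (2 * s - 1) * |phiL0 L (⇑u) ρ|
        = (c2 * ρ ^ (2 * σ - 1)) * ∫ ζ : ℝ, ζ ^ (2 * L + 2) * gg ζ / (ζ ^ 2 + 4 * ρ ^ 2) := by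
      rw [phiL0, abs_mul, _root_.abs_of_nonneg hInn]
      have h1 : |(-1 : ℝ) ^ L / (2 ^ (2 * L + 1) * ρ ^ (2 * L))|
          = 1 / (2 ^ (2 * L + 1) * ρ ^ (2 * L)) := by
        rw [abs_div, _root_.abs_pow, abs_neg, abs_one, one_pow, _root_.abs_of_pos (by positivity)]
      rw [h1]
      have hexp : ρ ^ (2 * s - 1) = ρ ^ (2 * σ - 1) * ρ ^ (2 * L) := by
        rw [← Real.rpow_natCast ρ (2 * L), ← Real.rpow_add hρ]
        congr 1
        rw [hσdef]; push_cast; ring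
      rw [hexp, hc2def]
      have h2 : ((2:ℝ)⁻¹) ^ (2 * L + 1) = 1 / 2 ^ (2 * L + 1) := by
        rw [inv_pow]; exact (one_div _).symm
      rw [h2]
      field_simp
    rw [habs, ENNReal.ofReal_mul (by positivity), hIρ]
  -- product measurability
  have hWH : Measurable (Function.uncurry fun ρ ζ : ℝ => W ρ * Hf ρ ζ) := by
    refine Measurable.mul (f := fun p : ℝ × ℝ => W p.1) (g := fun p : ℝ × ℝ => Hf p.1 p.2) ?_ ?_
    · exact ((measurable_fst.pow_const _).const_mul c2).ennreal_ofReal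
    · exact (((measurable_snd.pow_const _).mul (hggm.comp measurable_snd)).div
        ((measurable_snd.pow_const 2).add
          ((measurable_fst.pow_const 2).const_mul 4))).ennreal_ofReal
  -- Tonelli
  have hTon : ∀ R : ℝ, 0 ≤ R →
      (∫⁻ ρ in Set.Ioi R, ENNReal.ofReal (ρ ^ (2 * s - 1) * |phiL0 L (⇑u) ρ|))
        = ∫⁻ ζ : ℝ, ∫⁻ ρ in Set.Ioi R, W ρ * Hf ρ ζ := by
    intro R hR
    have h1 : (∫⁻ ρ in Set.Ioi R, ENNReal.ofReal (ρ ^ (2 * s - 1) * |phiL0 L (⇑u) ρ|))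
        = ∫⁻ ρ in Set.Ioi R, ∫⁻ ζ, W ρ * Hf ρ ζ := by
      apply setLIntegral_congr_fun_ae measurableSet_Ioi
      refine Filter.Eventually.of_forall fun ρ hρ => ?_
      rw [hphiabs ρ (lt_of_le_of_lt hR hρ), lintegral_const_mul (W ρ) (hHfmeas ρ)]
    rw [h1]
    exact lintegral_lintegral_swap hWH.aemeasurable
  -- evaluation of the inner integral over all of `(0,∞)`
  have hinner : ∀ᵐ ζ : ℝ, (∫⁻ ρ in Set.Ioi (0:ℝ), W ρ * Hf ρ ζ)
      = ENNReal.ofReal c2 * Kconst σ * A ζ := by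
    have hae : ∀ᵐ ζ : ℝ, ζ ≠ (0 : ℝ) := by
      rw [ae_iff]; simp
    filter_upwards [hae] with ζ hζ
    have hz : 0 < |ζ| := abs_pos.mpr hζ
    have hnum : 0 ≤ ζ ^ (2 * L + 2) * gg ζ :=
      mul_nonneg (Even.pow_nonneg ⟨L + 1, by ring⟩ ζ) (hgg0 ζ)
    have hsp : ∀ᵐ ρ : ℝ, ρ ∈ Set.Ioi (0:ℝ) → W ρ * Hf ρ ζ
        = ENNReal.ofReal (c2 * (ζ ^ (2 * L + 2) * gg ζ))
            * ENNReal.ofReal (ρ ^ (2 * σ - 1) / (|ζ| ^ 2 + 4 * ρ ^ 2)) := by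
      refine Filter.Eventually.of_forall fun ρ hρ => ?_
      have hρ0 : 0 < ρ := hρ
      rw [hWdef, hHfdef]
      rw [← ENNReal.ofReal_mul (mul_nonneg hc2.le (Real.rpow_nonneg hρ0.le _)),
        ← ENNReal.ofReal_mul (mul_nonneg hc2.le hnum)]
      congr 1
      rw [_root_.sq_abs]
      ring
    rw [setLIntegral_congr_fun_ae measurableSet_Ioi hsp,
      lintegral_const_mul' _ _ ENNReal.ofReal_ne_top, J_eq hz,
      ENNReal.ofReal_mul hc2.le]
    have hA : ENNReal.ofReal (ζ ^ (2 * L + 2) * gg ζ)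
        * ENNReal.ofReal (|ζ| ^ (2 * σ - 2)) = A ζ := by
      rw [← ENNReal.ofReal_mul hnum, hAdef]
      congr 1
      have h1 : ζ ^ (2 * L + 2) = |ζ| ^ ((2 * L + 2 : ℕ) : ℝ) := by
        rw [Real.rpow_natCast, Even.pow_abs ⟨L + 1, by ring⟩]
      rw [h1, mul_right_comm, ← Real.rpow_add hz]
      rw [show ((2 * L + 2 : ℕ) : ℝ) + (2 * σ - 2) = 2 * s by rw [hσdef]; push_cast; ring]
    calc ENNReal.ofReal c2 * ENNReal.ofReal (ζ ^ (2 * L + 2) * gg ζ)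
          * (ENNReal.ofReal (|ζ| ^ (2 * σ - 2)) * Kconst σ)
        = ENNReal.ofReal c2 * Kconst σ
            * (ENNReal.ofReal (ζ ^ (2 * L + 2) * gg ζ)
              * ENNReal.ofReal (|ζ| ^ (2 * σ - 2))) := by ring
      _ = ENNReal.ofReal c2 * Kconst σ * A ζ := by rw [hA]
  have hcore : (∫⁻ ρ in Set.Ioi (0:ℝ), ENNReal.ofReal (ρ ^ (2 * s - 1) * |phiL0 L (⇑u) ρ|))
      = ENNReal.ofReal c2 * Kconst σ * ∫⁻ ζ, A ζ := by
    rw [hTon 0 le_rfl, lintegral_congr_ae hinner, lintegral_const_mul _ hAmeas]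
  -- measurability of the Bochner integrand
  have hmeasφ : Measurable (fun ρ : ℝ => ρ ^ (2 * s - 1) * |phiL0 L (⇑u) ρ|) := by
    have hFprod : StronglyMeasurable
        (fun p : ℝ × ℝ => p.2 ^ (2 * L + 2) * gg p.2 / (p.2 ^ 2 + 4 * p.1 ^ 2)) :=
      Measurable.stronglyMeasurable
        (((measurable_snd.pow_const _).mul (hggm.comp measurable_snd)).div
          ((measurable_snd.pow_const 2).add ((measurable_fst.pow_const 2).const_mul 4)))
    have hIm : Measurable (fun ρ : ℝ =>
        ∫ ζ : ℝ, ζ ^ (2 * L + 2) * gg ζ / (ζ ^ 2 + 4 * ρ ^ 2)) :=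
      hFprod.integral_prod_right'.measurable
    have hφ : Measurable (phiL0 L (⇑u)) := by
      unfold phiL0
      exact (measurable_const.div
        ((measurable_id.pow_const _).const_mul _)).mul hIm
    exact (measurable_id.pow_const _).mul hφ.abs
  have hconv : ∀ R : ℝ, 0 ≤ R →
      (∫ ρ in Set.Ioi R, ρ ^ (2 * s - 1) * |phiL0 L (⇑u) ρ|)
        = (∫⁻ ρ in Set.Ioi R, ENNReal.ofReal (ρ ^ (2 * s - 1) * |phiL0 L (⇑u) ρ|)).toReal := by
    intro R hR
    apply integral_eq_lintegral_of_nonneg_ae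
    · filter_upwards [ae_restrict_mem measurableSet_Ioi] with ρ hρ
      have hρ0 : 0 < ρ := lt_of_le_of_lt hR hρ
      exact mul_nonneg (Real.rpow_nonneg hρ0.le _) (abs_nonneg _)
    · exact hmeasφ.aestronglyMeasurable
  -- a name for the total integral
  have hT0 : (∫⁻ ρ in Set.Ioi (0:ℝ), ENNReal.ofReal (ρ ^ (2 * s - 1) * |phiL0 L (⇑u) ρ|))
      = ENNReal.ofReal c2 * Kconst σ * ENNReal.ofReal (homSobNormSq s (⇑u)) := by
    rw [hcore, hH]
  have hT0top : (∫⁻ ρ in Set.Ioi (0:ℝ), ENNReal.ofReal (ρ ^ (2 * s - 1) * |phiL0 L (⇑u) ρ|)) ≠ ⊤ := by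
    rw [hT0]
    exact (ENNReal.mul_lt_top (ENNReal.mul_lt_top ENNReal.ofReal_lt_top hKtop)
      ENNReal.ofReal_lt_top).ne
  constructor
  · -- first inequality
    rw [hconv 0 le_rfl, hT0]
    rw [ENNReal.toReal_mul, ENNReal.toReal_mul, ENNReal.toReal_ofReal hc2.le,
      ENNReal.toReal_ofReal hHnn]
  · -- second inequality
    intro R hR
    set F : ℝ → ℝ≥0∞ := fun ρ => ENNReal.ofReal (ρ ^ (2 * s - 1) * |phiL0 L (⇑u) ρ|) with hFdef
    have hsplit : (∫⁻ ρ in Set.Ioi (0:ℝ), F ρ)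
        = (∫⁻ ρ in Set.Ioc (0:ℝ) R, F ρ) + ∫⁻ ρ in Set.Ioi R, F ρ := by
      rw [← Set.Ioc_union_Ioi_eq_Ioi hR.le,
        lintegral_union measurableSet_Ioi (Set.Ioc_disjoint_Ioi le_rfl)]
    -- bound on the Ioc part
    have hHfB : ∀ ρ : ℝ, 0 < ρ → (∫⁻ ζ, Hf ρ ζ) ≤ B := by
      intro ρ hρ
      refine lintegral_mono fun ζ => ENNReal.ofReal_le_ofReal ?_
      have hd : (0:ℝ) < ζ ^ 2 + 4 * ρ ^ 2 := by positivity
      have hP : (0:ℝ) ≤ ζ ^ (2 * L) := Even.pow_nonneg ⟨L, by ring⟩ ζ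
      have h1 : |ζ| ^ (2 * (L:ℝ)) = ζ ^ (2 * L) := by
        rw [show (2 * (L:ℝ)) = ((2 * L : ℕ) : ℝ) by push_cast; ring,
          Real.rpow_natCast, Even.pow_abs ⟨L, by ring⟩]
      rw [div_le_iff₀ hd, h1]
      have h2 : ζ ^ (2 * L + 2) = ζ ^ (2 * L) * ζ ^ 2 := by rw [pow_add]
      nlinarith [mul_nonneg (mul_nonneg hP (hgg0 ζ)) (sq_nonneg ρ), hgg0 ζ, sq_nonneg ζ]
    have hIocEq : (∫⁻ ρ in Set.Ioc (0:ℝ) R, F ρ)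
        = ∫⁻ ρ in Set.Ioc (0:ℝ) R, W ρ * ∫⁻ ζ, Hf ρ ζ := by
      apply setLIntegral_congr_fun_ae measurableSet_Ioc
      exact Filter.Eventually.of_forall fun ρ hρ => hphiabs ρ hρ.1
    have hWioc : (∫⁻ ρ in Set.Ioc (0:ℝ) R, W ρ)
        = ENNReal.ofReal c2 * ENNReal.ofReal (R ^ (2 * σ) / (2 * σ)) := by
      have hWsplit : ∀ ρ : ℝ, W ρ = ENNReal.ofReal c2 * ENNReal.ofReal (ρ ^ (2 * σ - 1)) := by
        intro ρ
        rw [show W ρ = ENNReal.ofReal (c2 * ρ ^ (2 * σ - 1)) from rfl,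
          ENNReal.ofReal_mul hc2.le]
      simp_rw [hWsplit]
      rw [lintegral_const_mul' _ _ ENNReal.ofReal_ne_top]
      congr 1
      have hint : IntegrableOn (fun ρ : ℝ => ρ ^ (2 * σ - 1)) (Set.Ioc 0 R) := by
        have := intervalIntegral.intervalIntegrable_rpow' (a := 0) (b := R)
          (r := 2 * σ - 1) (by linarith)
        rwa [intervalIntegrable_iff_integrableOn_Ioc_of_le hR.le] at this
      have hnn : 0 ≤ᵐ[volume.restrict (Set.Ioc (0:ℝ) R)] fun ρ : ℝ => ρ ^ (2 * σ - 1) := by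
        filter_upwards [ae_restrict_mem measurableSet_Ioc] with ρ hρ
        exact Real.rpow_nonneg hρ.1.le _
      rw [← ofReal_integral_eq_lintegral_ofReal hint hnn]
      congr 1
      rw [← intervalIntegral.integral_of_le hR.le,
        integral_rpow (Or.inl (by linarith : (-1:ℝ) < 2 * σ - 1))]
      rw [Real.zero_rpow (by intro h; linarith : 2 * σ - 1 + 1 ≠ 0)]
      rw [show 2 * σ - 1 + 1 = 2 * σ by ring]
      ring
    have hIocBound : (∫⁻ ρ in Set.Ioc (0:ℝ) R, F ρ)
        ≤ ENNReal.ofReal c2 * ENNReal.ofReal (R ^ (2 * σ) / (2 * σ)) * B := by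
      rw [hIocEq, ← hWioc, ← lintegral_mul_const _ hWmeas]
      refine setLIntegral_mono' measurableSet_Ioc fun ρ hρ => ?_
      exact mul_le_mul' le_rfl (hHfB ρ hρ.1)
    -- pass to real numbers
    have hTRle : (∫⁻ ρ in Set.Ioi R, F ρ) ≤ ∫⁻ ρ in Set.Ioi (0:ℝ), F ρ :=
      lintegral_mono_set fun ρ hρ => lt_trans hR hρ
    have hTRtop : (∫⁻ ρ in Set.Ioi R, F ρ) ≠ ⊤ := (lt_of_le_of_lt hTRle hT0top.lt_top).ne
    have hTIoctop : (∫⁻ ρ in Set.Ioc (0:ℝ) R, F ρ) ≠ ⊤ := by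
      refine (lt_of_le_of_lt (lintegral_mono_set fun ρ hρ => hρ.1) hT0top.lt_top).ne
    have hreal : c2 * Kr * homSobNormSq s (⇑u)
        = (∫⁻ ρ in Set.Ioc (0:ℝ) R, F ρ).toReal + (∫⁻ ρ in Set.Ioi R, F ρ).toReal := by
      have := congrArg ENNReal.toReal (hT0.symm.trans hsplit)
      rw [ENNReal.toReal_add hTIoctop hTRtop] at this
      rw [← this, ENNReal.toReal_mul, ENNReal.toReal_mul, ENNReal.toReal_ofReal hc2.le,
        ENNReal.toReal_ofReal hHnn, hKrdef]
    have hIocReal : (∫⁻ ρ in Set.Ioc (0:ℝ) R, F ρ).toReal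
        ≤ c2 * (R ^ (2 * σ) / (2 * σ)) * homSobNormSq (L : ℝ) (⇑u) := by
      have h1 : ENNReal.ofReal c2 * ENNReal.ofReal (R ^ (2 * σ) / (2 * σ)) * B
          = ENNReal.ofReal (c2 * (R ^ (2 * σ) / (2 * σ)) * homSobNormSq (L : ℝ) (⇑u)) := by
        rw [← hB, ← ENNReal.ofReal_mul hc2.le, ← ENNReal.ofReal_mul (by positivity)]
      exact ENNReal.toReal_le_of_le_ofReal (by positivity) (h1 ▸ hIocBound)
    have hTRReal : (∫⁻ ρ in Set.Ioi R, F ρ).toReal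
        = ∫ ρ in Set.Ioi R, ρ ^ (2 * s - 1) * |phiL0 L (⇑u) ρ| := (hconv R hR.le).symm
    -- final arithmetic
    set IR : ℝ := ∫ ρ in Set.Ioi R, ρ ^ (2 * s - 1) * |phiL0 L (⇑u) ρ| with hIRdef
    set Y : ℝ := homSobNormSq (L : ℝ) (⇑u) with hYdef
    set t : ℝ := (∫⁻ ρ in Set.Ioc (0:ℝ) R, F ρ).toReal with htdef
    have hIR0 : 0 ≤ IR := by rw [← hTRReal]; exact ENNReal.toReal_nonneg
    have ht0 : 0 ≤ t := ENNReal.toReal_nonneg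
    have htle : t ≤ c2 * (R ^ (2 * σ) / (2 * σ)) * Y := hIocReal
    have hEq : c2 * Kr * homSobNormSq s (⇑u) = t + IR := by
      rw [hreal, hTRReal]
    have hRσ0 : 0 ≤ R ^ (2 * σ) := Real.rpow_nonneg hR.le _
    have hc2m : (1:ℝ) ≤ c2 * ((2:ℝ) ^ (2 * L + 1)) := by
      rw [hc2def, ← mul_pow]
      norm_num
    have hm1 : (2:ℝ) ^ (2 * L + 1) ≤ m := le_max_left _ _
    have hm2 : 1 / (2 * σ) ≤ m := le_max_right _ _
    have htle' : t ≤ c2 * (R ^ (2 * σ) * (1 / (2 * σ))) * Y :=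
      htle.trans (le_of_eq (by ring))
    exact final_arith hc2 hKr0 hIR0 hYnn hRσ0 hc2m hm1 hm2 htle' hEq
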